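/- A priori bound on the interface trace of the stent concentration: let δ, P̃, l, T > 0, let g : [0,T] → ℝ be continuous, and let c be a classical solution of the stent equation on [-l,0] × [0,T] with interface data g (that is, c, ∂_t c, ∂_x c, ∂_{xx} c are continuous on [-l,0] × [0,T], ∂_t c = δ·∂_{xx} c on (-l,0) × (0,T], ∂_x c(-l,t) = 0 and ∂_x c(0,t) + P̃·c(0,t) = P̃·g(t) for t ∈ (0,T]) satisfying c(x,0) = 1 for all x ∈ [-l,0]. Then ∫_0^T c(0,t)² dt ≤ ∫_0^T g(t)² dt + l/(δ·P̃). -/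

import Mathlib

/-- A priori bound on the interface trace of the stent concentration: if `c` is a
classical solution of the stent equation `∂ₜc = δ·c_xx` on `[-l,0] × [0,T]` with
interface data `g` (i.e. `c_x(-l,t) = 0` and `c_x(0,t) + Pt·c(0,t) = Pt·g(t)`) and
initial data `c(·,0) ≡ 1`, then `∫_0^T c(0,t)² dt ≤ ∫_0^T g(t)² dt + l/(δ·Pt)`. -/
theorem stent_interface_trace_apriori_bound
    (δ Pt l T : ℝ) (hδ : 0 < δ) (hPt : 0 < Pt) (hl : 0 < l) (hT : 0 < T)
    (g : ℝ → ℝ) (hg : ContinuousOn g (Set.Icc 0 T))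
    (c ct cx cxx : ℝ → ℝ → ℝ)
    (hc : ContinuousOn (fun p : ℝ × ℝ => c p.1 p.2) (Set.Icc (-l) 0 ×ˢ Set.Icc 0 T))
    (hct : ContinuousOn (fun p : ℝ × ℝ => ct p.1 p.2) (Set.Icc (-l) 0 ×ˢ Set.Icc 0 T))
    (hcx : ContinuousOn (fun p : ℝ × ℝ => cx p.1 p.2) (Set.Icc (-l) 0 ×ˢ Set.Icc 0 T))
    (hcxx : ContinuousOn (fun p : ℝ × ℝ => cxx p.1 p.2) (Set.Icc (-l) 0 ×ˢ Set.Icc 0 T))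
    (hdt : ∀ x ∈ Set.Icc (-l) 0, ∀ t ∈ Set.Icc 0 T,
      HasDerivWithinAt (fun s => c x s) (ct x t) (Set.Icc 0 T) t)
    (hdx : ∀ x ∈ Set.Icc (-l) 0, ∀ t ∈ Set.Icc 0 T,
      HasDerivWithinAt (fun y => c y t) (cx x t) (Set.Icc (-l) 0) x)
    (hdxx : ∀ x ∈ Set.Icc (-l) 0, ∀ t ∈ Set.Icc 0 T,
      HasDerivWithinAt (fun y => cx y t) (cxx x t) (Set.Icc (-l) 0) x)
    (hpde : ∀ x ∈ Set.Ioo (-l) 0, ∀ t ∈ Set.Ioc 0 T, ct x t = δ * cxx x t)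
    (hbcl : ∀ t ∈ Set.Ioc 0 T, cx (-l) t = 0)
    (hbc0 : ∀ t ∈ Set.Ioc 0 T, cx 0 t + Pt * c 0 t = Pt * g t)
    (hic : ∀ x ∈ Set.Icc (-l) 0, c x 0 = 1) :
    (∫ t in (0 : ℝ)..T, (c 0 t) ^ 2) ≤
      (∫ t in (0 : ℝ)..T, (g t) ^ 2) + l / (δ * Pt) := by
  have hl0 : (-l : ℝ) ≤ 0 := by linarith
  have hT0 : (0 : ℝ) ≤ T := hT.le
  have hmem0 : (0 : ℝ) ∈ Set.Icc (-l) (0:ℝ) := ⟨hl0, le_refl _⟩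
  have hmeml : (-l : ℝ) ∈ Set.Icc (-l) (0:ℝ) := ⟨le_refl _, hl0⟩
  -- one-variable continuity helpers
  have fixx : ∀ (f : ℝ → ℝ → ℝ),
      ContinuousOn (fun p : ℝ × ℝ => f p.1 p.2) (Set.Icc (-l) 0 ×ˢ Set.Icc 0 T) →
      ∀ x ∈ Set.Icc (-l) (0:ℝ), ContinuousOn (fun t => f x t) (Set.Icc 0 T) := by
    intro f hf x hx
    exact hf.comp (Continuous.continuousOn (by fun_prop)) (fun t ht => Set.mk_mem_prod hx ht)
  have fixt : ∀ (f : ℝ → ℝ → ℝ),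
      ContinuousOn (fun p : ℝ × ℝ => f p.1 p.2) (Set.Icc (-l) 0 ×ˢ Set.Icc 0 T) →
      ∀ t ∈ Set.Icc (0:ℝ) T, ContinuousOn (fun x => f x t) (Set.Icc (-l) 0) := by
    intro f hf t ht
    exact hf.comp (Continuous.continuousOn (by fun_prop)) (fun x hx => Set.mk_mem_prod hx ht)
  -- Step A: time FTC
  have stepA : ∀ x ∈ Set.Icc (-l) (0:ℝ),
      (∫ t in (0:ℝ)..T, c x t * ct x t) = ((c x T) ^ 2 - 1) / 2 := by
    intro x hx
    have hcont : ContinuousOn (fun s => (c x s) ^ 2 / 2) (Set.Icc 0 T) :=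
      ((fixx c hc x hx).pow 2).div_const 2
    have hderiv : ∀ t ∈ Set.Ioo (0:ℝ) T,
        HasDerivWithinAt (fun s => (c x s) ^ 2 / 2) (c x t * ct x t) (Set.Ioi t) t := by
      intro t ht
      have h1 : HasDerivAt (fun s => c x s) (ct x t) t :=
        (hdt x hx t (Set.Ioo_subset_Icc_self ht)).hasDerivAt (Icc_mem_nhds ht.1 ht.2)
      have h2 := (h1.pow 2).div_const 2
      have he : ((2:ℕ) : ℝ) * c x t ^ (2 - 1) * ct x t / 2 = c x t * ct x t := by
        push_cast; ring
      rw [he] at h2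
      exact h2.hasDerivWithinAt
    have hint : IntervalIntegrable (fun t => c x t * ct x t) MeasureTheory.volume 0 T :=
      ContinuousOn.intervalIntegrable_of_Icc hT0 ((fixx c hc x hx).mul (fixx ct hct x hx))
    have := intervalIntegral.integral_eq_sub_of_hasDeriv_right_of_le hT0 hcont hderiv hint
    rw [this, hic x hx]; ring
  -- Step B: integration by parts in x, for t in (0,T]
  have stepB : ∀ t ∈ Set.Ioc (0:ℝ) T,
      (∫ x in (-l)..(0:ℝ), (cx x t * cx x t + c x t * cxx x t)) = c 0 t * cx 0 t := by
    intro t ht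
    have htB : t ∈ Set.Icc (0:ℝ) T := Set.Ioc_subset_Icc_self ht
    have hcont : ContinuousOn (fun y => c y t * cx y t) (Set.Icc (-l) 0) :=
      (fixt c hc t htB).mul (fixt cx hcx t htB)
    have hderiv : ∀ x ∈ Set.Ioo (-l) (0:ℝ),
        HasDerivWithinAt (fun y => c y t * cx y t)
          (cx x t * cx x t + c x t * cxx x t) (Set.Ioi x) x := by
      intro x hx
      have h1 : HasDerivAt (fun y => c y t) (cx x t) x :=
        (hdx x (Set.Ioo_subset_Icc_self hx) t htB).hasDerivAt (Icc_mem_nhds hx.1 hx.2)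
      have h2 : HasDerivAt (fun y => cx y t) (cxx x t) x :=
        (hdxx x (Set.Ioo_subset_Icc_self hx) t htB).hasDerivAt (Icc_mem_nhds hx.1 hx.2)
      exact (h1.mul h2).hasDerivWithinAt
    have hint : IntervalIntegrable (fun x => cx x t * cx x t + c x t * cxx x t)
        MeasureTheory.volume (-l) 0 :=
      ContinuousOn.intervalIntegrable_of_Icc hl0
        (((fixt cx hcx t htB).mul (fixt cx hcx t htB)).add
          ((fixt c hc t htB).mul (fixt cxx hcxx t htB)))
    have := intervalIntegral.integral_eq_sub_of_hasDeriv_right_of_le hl0 hcont hderiv hint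
    rw [this, hbcl t ht]; ring
  -- Step B2: the per-time inequality
  have stepB2 : ∀ t ∈ Set.Ioc (0:ℝ) T,
      (∫ x in (-l)..(0:ℝ), c x t * ct x t) ≤ δ * Pt * (c 0 t * g t - (c 0 t) ^ 2) := by
    intro t ht
    have htB : t ∈ Set.Icc (0:ℝ) T := Set.Ioc_subset_Icc_self ht
    have heq : (∫ x in (-l)..(0:ℝ), c x t * ct x t)
        = δ * ∫ x in (-l)..(0:ℝ), c x t * cxx x t := by
      rw [intervalIntegral.integral_of_le hl0, intervalIntegral.integral_of_le hl0,
        MeasureTheory.integral_Ioc_eq_integral_Ioo, MeasureTheory.integral_Ioc_eq_integral_Ioo,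
        ← MeasureTheory.integral_const_mul]
      refine MeasureTheory.setIntegral_congr_fun measurableSet_Ioo ?_
      intro x hx
      show c x t * ct x t = δ * (c x t * cxx x t)
      rw [hpde x hx t ht]; ring
    have hint1 : IntervalIntegrable (fun x => cx x t * cx x t) MeasureTheory.volume (-l) 0 :=
      ContinuousOn.intervalIntegrable_of_Icc hl0 ((fixt cx hcx t htB).mul (fixt cx hcx t htB))
    have hint2 : IntervalIntegrable (fun x => c x t * cxx x t) MeasureTheory.volume (-l) 0 :=
      ContinuousOn.intervalIntegrable_of_Icc hl0 ((fixt c hc t htB).mul (fixt cxx hcxx t htB))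
    have hsplit : (∫ x in (-l)..(0:ℝ), c x t * cxx x t)
        = c 0 t * cx 0 t - ∫ x in (-l)..(0:ℝ), cx x t * cx x t := by
      have hB := stepB t ht
      rw [intervalIntegral.integral_add hint1 hint2] at hB
      linarith
    have hcx2 : 0 ≤ ∫ x in (-l)..(0:ℝ), cx x t * cx x t :=
      intervalIntegral.integral_nonneg hl0 (fun x _ => mul_self_nonneg _)
    have hb := hbc0 t ht
    have hcx0 : cx 0 t = Pt * g t - Pt * c 0 t := by linarith
    rw [heq, hsplit, hcx0]
    nlinarith [mul_nonneg hδ.le hcx2]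
  -- Fubini setup
  have hFc : ContinuousOn (fun p : ℝ × ℝ => c p.1 p.2 * ct p.1 p.2)
      (Set.Icc (-l) 0 ×ˢ Set.Icc 0 T) := hc.mul hct
  have hFi : MeasureTheory.IntegrableOn (fun p : ℝ × ℝ => c p.1 p.2 * ct p.1 p.2)
      (Set.Icc (-l) 0 ×ˢ Set.Icc 0 T) :=
    hFc.integrableOn_compact (isCompact_Icc.prod isCompact_Icc)
  have hFi2 : MeasureTheory.Integrable
      (Function.uncurry fun x t => c x t * ct x t)
      ((MeasureTheory.volume.restrict (Set.Ioc (-l) 0)).prod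
        (MeasureTheory.volume.restrict (Set.Ioc 0 T))) := by
    rw [MeasureTheory.Measure.prod_restrict, ← MeasureTheory.Measure.volume_eq_prod]
    exact hFi.mono_set (Set.prod_mono Set.Ioc_subset_Icc_self Set.Ioc_subset_Icc_self)
  have hswap : (∫ x in Set.Ioc (-l) (0:ℝ), ∫ t in Set.Ioc (0:ℝ) T, c x t * ct x t)
      = ∫ t in Set.Ioc (0:ℝ) T, ∫ x in Set.Ioc (-l) (0:ℝ), c x t * ct x t :=
    MeasureTheory.integral_integral_swap hFi2
  have hI : (∫ x in (-l)..(0:ℝ), (∫ t in (0:ℝ)..T, c x t * ct x t))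
      = ∫ t in (0:ℝ)..T, (∫ x in (-l)..(0:ℝ), c x t * ct x t) := by
    rw [intervalIntegral.integral_of_le hl0, intervalIntegral.integral_of_le hT0]
    simp_rw [intervalIntegral.integral_of_le hT0, intervalIntegral.integral_of_le hl0]
    exact hswap
  -- lower bound for the x-first integral
  have hcT : ContinuousOn (fun x => c x T) (Set.Icc (-l) 0) :=
    fixt c hc T (Set.right_mem_Icc.mpr hT0)
  have hlow : -(l/2) ≤ ∫ x in (-l)..(0:ℝ), (∫ t in (0:ℝ)..T, c x t * ct x t) := by
    have hcongr : (∫ x in (-l)..(0:ℝ), (∫ t in (0:ℝ)..T, c x t * ct x t))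
        = ∫ x in (-l)..(0:ℝ), ((c x T) ^ 2 - 1) / 2 := by
      refine intervalIntegral.integral_congr ?_
      intro x hx
      rw [Set.uIcc_of_le hl0] at hx
      exact stepA x hx
    rw [hcongr]
    have hintg : IntervalIntegrable (fun x => ((c x T) ^ 2 - 1) / 2)
        MeasureTheory.volume (-l) 0 :=
      ContinuousOn.intervalIntegrable_of_Icc hl0 (((hcT.pow 2).sub continuousOn_const).div_const 2)
    have hmono := intervalIntegral.integral_mono_on hl0
      (intervalIntegrable_const (c := (-(1:ℝ)/2))) hintg
      (fun x _ => by nlinarith [sq_nonneg (c x T)])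
    have hconst : (∫ _x in (-l)..(0:ℝ), (-(1:ℝ)/2)) = -(l/2) := by
      simp [intervalIntegral.integral_const]; ring
    linarith [hmono, hconst.symm.le]
  -- upper bound for the t-first integral
  have hintφ : MeasureTheory.IntegrableOn
      (fun t => ∫ x in (-l)..(0:ℝ), c x t * ct x t) (Set.Ioc 0 T) := by
    have := hFi2.swap.integral_prod_left
    refine this.congr (Filter.EventuallyEq.of_eq ?_)
    funext t
    rw [intervalIntegral.integral_of_le hl0]
    rfl
  have hρcont : ContinuousOn (fun t => δ * Pt * (c 0 t * g t - (c 0 t) ^ 2)) (Set.Icc 0 T) :=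
    (continuousOn_const.mul (((fixx c hc 0 hmem0).mul hg).sub ((fixx c hc 0 hmem0).pow 2)))
  have hintρ : MeasureTheory.IntegrableOn
      (fun t => δ * Pt * (c 0 t * g t - (c 0 t) ^ 2)) (Set.Ioc 0 T) :=
    (hρcont.integrableOn_compact isCompact_Icc).mono_set Set.Ioc_subset_Icc_self
  have hup : (∫ t in (0:ℝ)..T, (∫ x in (-l)..(0:ℝ), c x t * ct x t))
      ≤ ∫ t in (0:ℝ)..T, δ * Pt * (c 0 t * g t - (c 0 t) ^ 2) := by
    rw [intervalIntegral.integral_of_le hT0, intervalIntegral.integral_of_le hT0]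
    exact MeasureTheory.setIntegral_mono_on hintφ hintρ measurableSet_Ioc stepB2
  -- assemble
  set Sc := ∫ t in (0:ℝ)..T, (c 0 t) ^ 2 with hSc
  set Sg := ∫ t in (0:ℝ)..T, (g t) ^ 2 with hSg
  have hintc0 : IntervalIntegrable (fun t => (c 0 t) ^ 2) MeasureTheory.volume 0 T :=
    ContinuousOn.intervalIntegrable_of_Icc hT0 ((fixx c hc 0 hmem0).pow 2)
  have hintg0 : IntervalIntegrable (fun t => g t ^ 2) MeasureTheory.volume 0 T :=
    ContinuousOn.intervalIntegrable_of_Icc hT0 (hg.pow 2)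
  have hintcg : IntervalIntegrable (fun t => c 0 t * g t) MeasureTheory.volume 0 T :=
    ContinuousOn.intervalIntegrable_of_Icc hT0 ((fixx c hc 0 hmem0).mul hg)
  have hρsplit : (∫ t in (0:ℝ)..T, δ * Pt * (c 0 t * g t - (c 0 t) ^ 2))
      = δ * Pt * ((∫ t in (0:ℝ)..T, c 0 t * g t) - Sc) := by
    rw [intervalIntegral.integral_const_mul, intervalIntegral.integral_sub hintcg hintc0]
  have hyoung : (∫ t in (0:ℝ)..T, c 0 t * g t) ≤ (Sc + Sg) / 2 := by
    have h1 : (∫ t in (0:ℝ)..T, c 0 t * g t)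
        ≤ ∫ t in (0:ℝ)..T, ((c 0 t) ^ 2 + g t ^ 2) / 2 := by
      refine intervalIntegral.integral_mono_on hT0 hintcg
        (ContinuousOn.intervalIntegrable_of_Icc hT0
          ((((fixx c hc 0 hmem0).pow 2).add (hg.pow 2)).div_const 2)) ?_
      intro t _
      nlinarith [sq_nonneg (c 0 t - g t)]
    have h2 : (∫ t in (0:ℝ)..T, ((c 0 t) ^ 2 + g t ^ 2) / 2) = (Sc + Sg) / 2 := by
      simp_rw [div_eq_mul_inv, intervalIntegral.integral_mul_const,
        intervalIntegral.integral_add hintc0 hintg0]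
      rw [hSc, hSg]
    linarith
  have hkey : -(l/2) ≤ δ * Pt * ((Sc + Sg) / 2 - Sc) := by
    have hc1 : δ * Pt * ((∫ t in (0:ℝ)..T, c 0 t * g t) - Sc)
        ≤ δ * Pt * ((Sc + Sg) / 2 - Sc) := by
      have := mul_pos hδ hPt
      nlinarith
    calc -(l/2) ≤ _ := hlow
      _ = _ := hI
      _ ≤ _ := hup
      _ = _ := hρsplit
      _ ≤ _ := hc1
  have hpos : (0:ℝ) < δ * Pt := mul_pos hδ hPt
  rw [← sub_le_iff_le_add', le_div_iff₀ hpos]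
  nlinarith [hkey, hpos]
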